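/- Let I be a finite subset of ZMod α × ZMod β × ZMod γ such that no two distinct elements of I agree in exactly two coordinates. Then the cardinality of I is at most α·β. -/
import Mathlib


/-- Two triples agree in exactly two of their three coordinates. -/
def agreeTwo {α β γ : ℕ} (a b : ZMod α × ZMod β × ZMod γ) : Prop :=
  (a.1 = b.1 ∧ a.2.1 = b.2.1 ∧ a.2.2 ≠ b.2.2) ∨
  (a.1 = b.1 ∧ a.2.1 ≠ b.2.1 ∧ a.2.2 = b.2.2) ∨
  (a.1 ≠ b.1 ∧ a.2.1 = b.2.1 ∧ a.2.2 = b.2.2)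

theorem stmt_13 (α β γ : ℕ) (hα : α.Prime) (hβ : β.Prime) (hγ : γ.Prime)
    (hαβ : α < β) (hβγ : β < γ)
    (I : Finset (ZMod α × ZMod β × ZMod γ))
    (hI : ∀ a ∈ I, ∀ b ∈ I, a ≠ b → ¬ agreeTwo a b) :
    I.card ≤ α * β := by
  haveI : NeZero α := ⟨hα.pos.ne'⟩
  haveI : NeZero β := ⟨hβ.pos.ne'⟩
  have hinj : Set.InjOn (fun a : ZMod α × ZMod β × ZMod γ => (a.1, a.2.1)) I := by
    intro a ha b hb hab
    by_contra hne
    simp only [Prod.mk.injEq] at hab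
    obtain ⟨h1, h2⟩ := hab
    have h3 : a.2.2 ≠ b.2.2 := by
      intro h3
      exact hne (Prod.ext h1 (Prod.ext h2 h3))
    exact hI a ha b hb hne (Or.inl ⟨h1, h2, h3⟩)
  calc I.card ≤ (Finset.univ : Finset (ZMod α × ZMod β)).card :=
        Finset.card_le_card_of_injOn _ (fun _ _ => Finset.mem_univ _) hinj
    _ = α * β := by simp [Finset.card_univ, ZMod.card]
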